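/- Let (H,⇀,↼) be a matched pair of actions on a Hopf algebra (H,•,1,Δ,ε,T). Then the braided-commutativity condition a•b=(a₁⇀b₁)•(a₂↼b₂) is equivalent to a↼b = T(a₁⇀b₁)•a₂•b₂, which is in turn equivalent to T(a⇀b) = (a₁↼b₁)•T(b₂)•T(a₂), for all a,b ∈ H. -/

import Mathlib

open TensorProduct

noncomputable section

variable (k H : Type*) [Field k] [Ring H] [HopfAlgebra k H]

/-- Multiplication of `H` as a linear map. -/
def mu : H ⊗[k] H →ₗ[k] H := LinearMap.mul' k H
/-- Comultiplication. -/
def delta : H →ₗ[k] H ⊗[k] H := Coalgebra.comul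
/-- Counit. -/
def eps : H →ₗ[k] k := Coalgebra.counit
/-- Flip `a⊗b ↦ b⊗a`. -/
def tau : H ⊗[k] H →ₗ[k] H ⊗[k] H := (TensorProduct.comm k H H).toLinearMap
/-- Associator. -/
def assocMap : (H ⊗[k] H) ⊗[k] H →ₗ[k] H ⊗[k] (H ⊗[k] H) :=
  (TensorProduct.assoc k H H H).toLinearMap
/-- Inverse associator. -/
def assocInv : H ⊗[k] (H ⊗[k] H) →ₗ[k] (H ⊗[k] H) ⊗[k] H :=
  (TensorProduct.assoc k H H H).symm.toLinearMap
/-- The middle-four interchange `(a⊗b)⊗(c⊗d) ↦ (a⊗c)⊗(b⊗d)`. -/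
def ttcMap : (H ⊗[k] H) ⊗[k] (H ⊗[k] H) →ₗ[k] (H ⊗[k] H) ⊗[k] (H ⊗[k] H) :=
  (TensorProduct.tensorTensorTensorComm k H H H H).toLinearMap
/-- `a⊗b ↦ (a₁⊗b₁)⊗(a₂⊗b₂)` (Sweedler notation). -/
def dd : H ⊗[k] H →ₗ[k] (H ⊗[k] H) ⊗[k] (H ⊗[k] H) :=
  ttcMap k H ∘ₗ map (delta k H) (delta k H)
/-- `a⊗b ↦ ((a₁⊗b₁)⊗(a₂⊗b₂))⊗(a₃⊗b₃)`. -/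
def ddd : H ⊗[k] H →ₗ[k] ((H ⊗[k] H) ⊗[k] (H ⊗[k] H)) ⊗[k] (H ⊗[k] H) :=
  map (dd k H) LinearMap.id ∘ₗ dd k H
/-- `a⊗b ↦ ε(a)ε(b)`. -/
def epseps : H ⊗[k] H →ₗ[k] k := LinearMap.mul' k k ∘ₗ map (eps k H) (eps k H)
/-- `σ(a⊗b) = (a₁⇀b₁)⊗(a₂↼b₂)` attached to a pair of "actions". -/
def sig (l r : H ⊗[k] H →ₗ[k] H) : H ⊗[k] H →ₗ[k] H ⊗[k] H :=
  map l r ∘ₗ dd k H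

/-- The antipode of `H`. -/
def anti : H →ₗ[k] H := HopfAlgebra.antipode k

/-- A matched pair of actions `(H,⇀,↼)` on the Hopf algebra `H` (Definition 2.1):
`l`, `r` are a left and a right action of `H` on itself making `H` a left and right
`H`-module coalgebra, satisfying (mp.1)–(mp.4) and the braided commutativity (★). -/
structure MatchedPairOfActions (l r : H ⊗[k] H →ₗ[k] H) : Prop where
  one_act : ∀ b : H, l ((1 : H) ⊗ₜ[k] b) = b
  mul_act : ∀ a b c : H, l ((a * b) ⊗ₜ[k] c) = l (a ⊗ₜ[k] l (b ⊗ₜ[k] c))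
  act_one : ∀ a : H, r (a ⊗ₜ[k] (1 : H)) = a
  act_mul : ∀ a b c : H, r (a ⊗ₜ[k] (b * c)) = r (r (a ⊗ₜ[k] b) ⊗ₜ[k] c)
  comul_l : delta k H ∘ₗ l = map l l ∘ₗ dd k H
  counit_l : eps k H ∘ₗ l = epseps k H
  comul_r : delta k H ∘ₗ r = map r r ∘ₗ dd k H
  counit_r : eps k H ∘ₗ r = epseps k H
  mp1 : ∀ a : H, l (a ⊗ₜ[k] (1 : H)) = eps k H a • (1 : H)
  mp2 : ∀ b : H, r ((1 : H) ⊗ₜ[k] b) = eps k H b • (1 : H)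
  mp3 : l ∘ₗ map LinearMap.id (mu k H) ∘ₗ assocMap k H
      = mu k H ∘ₗ map LinearMap.id l ∘ₗ assocMap k H ∘ₗ map (sig k H l r) LinearMap.id
  mp4 : r ∘ₗ map (mu k H) LinearMap.id
      = mu k H ∘ₗ map r LinearMap.id ∘ₗ assocInv k H ∘ₗ map LinearMap.id (sig k H l r) ∘ₗ
          assocMap k H
  star : mu k H ∘ₗ sig k H l r = mu k H

/-- The second product `a·b := a₁•(T(a₂)⇀b)` attached to a left action `l = ⇀`. -/
def cdot (l : H ⊗[k] H →ₗ[k] H) : H ⊗[k] H →ₗ[k] H :=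
  mu k H ∘ₗ map LinearMap.id l ∘ₗ assocMap k H ∘ₗ
    map (map LinearMap.id (anti k H) ∘ₗ delta k H) LinearMap.id

/-- The map `S(a) := a₁⇀T(a₂)` attached to a left action `l = ⇀`. -/
def Smap (l : H ⊗[k] H →ₗ[k] H) : H →ₗ[k] H :=
  l ∘ₗ map LinearMap.id (anti k H) ∘ₗ delta k H

section Aux

open Coalgebra Finset

/-- Convolution product on `Hom(H⊗H, H)`. -/
def conv (f g : H ⊗[k] H →ₗ[k] H) : H ⊗[k] H →ₗ[k] H :=
  mu k H ∘ₗ map f g ∘ₗ dd k H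

/-- Convolution unit. -/
def uu : H ⊗[k] H →ₗ[k] H := Algebra.linearMap k H ∘ₗ epseps k H

variable {k H}

lemma uu_tmul (a b : H) :
    uu k H (a ⊗ₜ[k] b) = algebraMap k H (Coalgebra.counit a * Coalgebra.counit b) := rfl

lemma dd_tmul (a b : H) (ra : Coalgebra.Repr k a (H × H)) (rb : Coalgebra.Repr k b (H × H)) :
    dd k H (a ⊗ₜ[k] b) = ∑ i ∈ ra.index, ∑ j ∈ rb.index,
      (ra.left i ⊗ₜ[k] rb.left j) ⊗ₜ[k] (ra.right i ⊗ₜ[k] rb.right j) := by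
  have h : dd k H (a ⊗ₜ[k] b)
      = ttcMap k H ((Coalgebra.comul a) ⊗ₜ[k] (Coalgebra.comul b)) := rfl
  rw [h, ← ra.eq, ← rb.eq, TensorProduct.sum_tmul]
  simp only [TensorProduct.tmul_sum, map_sum]
  refine Finset.sum_congr rfl fun i _ => Finset.sum_congr rfl fun j _ => ?_
  simp [ttcMap]

lemma conv_tmul (f g : H ⊗[k] H →ₗ[k] H) (a b : H)
    (ra : Coalgebra.Repr k a (H × H)) (rb : Coalgebra.Repr k b (H × H)) :
    conv k H f g (a ⊗ₜ[k] b) = ∑ i ∈ ra.index, ∑ j ∈ rb.index,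
      f (ra.left i ⊗ₜ[k] rb.left j) * g (ra.right i ⊗ₜ[k] rb.right j) := by
  simp only [conv, LinearMap.comp_apply, dd_tmul a b ra rb, map_sum]
  simp [mu]

end Aux
section Aux2

open Coalgebra Finset

variable {k H}

lemma sum_counit_smul {a : H} (ra : Coalgebra.Repr k a (H × H)) :
    ∑ i ∈ ra.index, Coalgebra.counit (R := k) (ra.left i) • ra.right i = a := by
  have h := Coalgebra.sum_counit_tmul_eq ra
  have h2 := congrArg (TensorProduct.lid k H) h
  simp only [map_sum, TensorProduct.lid_tmul, one_smul] at h2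
  exact h2

lemma sum_smul_counit {a : H} (ra : Coalgebra.Repr k a (H × H)) :
    ∑ i ∈ ra.index, Coalgebra.counit (R := k) (ra.right i) • ra.left i = a := by
  have h := Coalgebra.sum_tmul_counit_eq ra
  have h2 := congrArg (TensorProduct.rid k H) h
  simp only [map_sum, TensorProduct.rid_tmul, one_smul] at h2
  exact h2

lemma conv_uu_left (f : H ⊗[k] H →ₗ[k] H) : conv k H (uu k H) f = f := by
  apply TensorProduct.ext'
  intro a b
  set ra := Coalgebra.Repr.arbitrary k a with hra
  set rb := Coalgebra.Repr.arbitrary k b with hrb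
  rw [conv_tmul (uu k H) f a b ra rb]
  calc ∑ i ∈ ra.index, ∑ j ∈ rb.index,
        uu k H (ra.left i ⊗ₜ[k] rb.left j) * f (ra.right i ⊗ₜ[k] rb.right j)
      = ∑ i ∈ ra.index, ∑ j ∈ rb.index,
        f ((Coalgebra.counit (R := k) (ra.left i) • ra.right i) ⊗ₜ[k]
           (Coalgebra.counit (R := k) (rb.left j) • rb.right j)) := by
        refine Finset.sum_congr rfl fun i _ => Finset.sum_congr rfl fun j _ => ?_
        rw [uu_tmul, ← Algebra.smul_def]
        simp [← TensorProduct.smul_tmul', smul_smul, mul_comm]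
    _ = f ((∑ i ∈ ra.index, Coalgebra.counit (R := k) (ra.left i) • ra.right i) ⊗ₜ[k]
           (∑ j ∈ rb.index, Coalgebra.counit (R := k) (rb.left j) • rb.right j)) := by
        rw [TensorProduct.sum_tmul]
        simp only [TensorProduct.tmul_sum, map_sum]
    _ = f (a ⊗ₜ[k] b) := by rw [_root_.sum_counit_smul ra, _root_.sum_counit_smul rb]

lemma conv_uu_right (f : H ⊗[k] H →ₗ[k] H) : conv k H f (uu k H) = f := by
  apply TensorProduct.ext'
  intro a b
  set ra := Coalgebra.Repr.arbitrary k a with hra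
  set rb := Coalgebra.Repr.arbitrary k b with hrb
  rw [conv_tmul f (uu k H) a b ra rb]
  calc ∑ i ∈ ra.index, ∑ j ∈ rb.index,
        f (ra.left i ⊗ₜ[k] rb.left j) * uu k H (ra.right i ⊗ₜ[k] rb.right j)
      = ∑ i ∈ ra.index, ∑ j ∈ rb.index,
        f ((Coalgebra.counit (R := k) (ra.right i) • ra.left i) ⊗ₜ[k]
           (Coalgebra.counit (R := k) (rb.right j) • rb.left j)) := by
        refine Finset.sum_congr rfl fun i _ => Finset.sum_congr rfl fun j _ => ?_
        rw [uu_tmul, ← Algebra.commutes, ← Algebra.smul_def]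
        simp [← TensorProduct.smul_tmul', smul_smul, mul_comm]
    _ = f ((∑ i ∈ ra.index, Coalgebra.counit (R := k) (ra.right i) • ra.left i) ⊗ₜ[k]
           (∑ j ∈ rb.index, Coalgebra.counit (R := k) (rb.right j) • rb.left j)) := by
        rw [TensorProduct.sum_tmul]
        simp only [TensorProduct.tmul_sum, map_sum]
    _ = f (a ⊗ₜ[k] b) := by rw [sum_smul_counit ra, sum_smul_counit rb]

end Aux2
section Aux3

open Coalgebra Finset

/-- `ν(x⊗y) = T(y)•T(x)`. -/
def nu : H ⊗[k] H →ₗ[k] H := mu k H ∘ₗ map (anti k H) (anti k H) ∘ₗ tau k H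

variable {k H}

lemma nu_tmul (x y : H) :
    nu k H (x ⊗ₜ[k] y) = HopfAlgebra.antipode (R := k) y * HopfAlgebra.antipode (R := k) x := rfl

lemma mu_tmul (x y : H) : mu k H (x ⊗ₜ[k] y) = x * y := rfl

lemma conv_mu_nu : conv k H (mu k H) (nu k H) = uu k H := by
  apply TensorProduct.ext'
  intro a b
  set ra := Coalgebra.Repr.arbitrary k a
  set rb := Coalgebra.Repr.arbitrary k b
  rw [conv_tmul (mu k H) (nu k H) a b ra rb, uu_tmul]
  calc ∑ i ∈ ra.index, ∑ j ∈ rb.index,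
        mu k H (ra.left i ⊗ₜ[k] rb.left j) * nu k H (ra.right i ⊗ₜ[k] rb.right j)
      = ∑ i ∈ ra.index, ra.left i *
          ((∑ j ∈ rb.index, rb.left j * HopfAlgebra.antipode (R := k) (rb.right j)) *
            HopfAlgebra.antipode (R := k) (ra.right i)) := by
        refine Finset.sum_congr rfl fun i _ => ?_
        rw [Finset.sum_mul, Finset.mul_sum]
        refine Finset.sum_congr rfl fun j _ => ?_
        rw [mu_tmul, nu_tmul]
        noncomm_ring
    _ = algebraMap k H (Coalgebra.counit a * Coalgebra.counit b) := by
        rw [HopfAlgebra.sum_mul_antipode_eq_algebraMap_counit rb]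
        have : ∀ i, ra.left i * (algebraMap k H (Coalgebra.counit (R := k) b) *
            HopfAlgebra.antipode (R := k) (ra.right i))
            = (ra.left i * HopfAlgebra.antipode (R := k) (ra.right i)) *
              algebraMap k H (Coalgebra.counit (R := k) b) := by
          intro i; rw [Algebra.commutes]; noncomm_ring
        simp_rw [this, ← Finset.sum_mul, HopfAlgebra.sum_mul_antipode_eq_algebraMap_counit ra, ← map_mul]

lemma conv_nu_mu : conv k H (nu k H) (mu k H) = uu k H := by
  apply TensorProduct.ext'
  intro a b
  set ra := Coalgebra.Repr.arbitrary k a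
  set rb := Coalgebra.Repr.arbitrary k b
  rw [conv_tmul (nu k H) (mu k H) a b ra rb, uu_tmul]
  calc ∑ i ∈ ra.index, ∑ j ∈ rb.index,
        nu k H (ra.left i ⊗ₜ[k] rb.left j) * mu k H (ra.right i ⊗ₜ[k] rb.right j)
      = ∑ j ∈ rb.index, HopfAlgebra.antipode (R := k) (rb.left j) *
          ((∑ i ∈ ra.index, HopfAlgebra.antipode (R := k) (ra.left i) * ra.right i) *
            rb.right j) := by
        rw [Finset.sum_comm]
        refine Finset.sum_congr rfl fun j _ => ?_
        rw [Finset.sum_mul, Finset.mul_sum]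
        refine Finset.sum_congr rfl fun i _ => ?_
        rw [mu_tmul, nu_tmul]
        noncomm_ring
    _ = algebraMap k H (Coalgebra.counit a * Coalgebra.counit b) := by
        rw [HopfAlgebra.sum_antipode_mul_eq_algebraMap_counit ra]
        have : ∀ j, HopfAlgebra.antipode (R := k) (rb.left j) *
            (algebraMap k H (Coalgebra.counit (R := k) a) * rb.right j)
            = (HopfAlgebra.antipode (R := k) (rb.left j) * rb.right j) *
              algebraMap k H (Coalgebra.counit (R := k) a) := by
          intro j; rw [Algebra.commutes]; noncomm_ring
        simp_rw [this, ← Finset.sum_mul, HopfAlgebra.sum_antipode_mul_eq_algebraMap_counit rb, ← map_mul,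
          mul_comm (Coalgebra.counit (R := k) b)]

end Aux3
section Aux4

open Coalgebra Finset

variable {k H}

lemma conv_Tl_l {l : H ⊗[k] H →ₗ[k] H}
    (hcomul_l : delta k H ∘ₗ l = map l l ∘ₗ dd k H)
    (hcounit_l : eps k H ∘ₗ l = epseps k H) :
    conv k H (anti k H ∘ₗ l) l = uu k H := by
  have h1 : map (anti k H ∘ₗ l) l = (anti k H).rTensor H ∘ₗ map l l := by
    rw [LinearMap.rTensor, ← TensorProduct.map_comp, LinearMap.id_comp]
  calc conv k H (anti k H ∘ₗ l) l
      = mu k H ∘ₗ (anti k H).rTensor H ∘ₗ (map l l ∘ₗ dd k H) := by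
        rw [conv, h1]; rw [LinearMap.comp_assoc]
    _ = (mu k H ∘ₗ (anti k H).rTensor H ∘ₗ Coalgebra.comul) ∘ₗ l := by
        rw [← hcomul_l]; rfl
    _ = (Algebra.linearMap k H ∘ₗ Coalgebra.counit) ∘ₗ l := by
        rw [← HopfAlgebra.mul_antipode_rTensor_comul (R := k) (A := H)]; rfl
    _ = Algebra.linearMap k H ∘ₗ (eps k H ∘ₗ l) := rfl
    _ = uu k H := by rw [hcounit_l]; rfl

lemma conv_l_Tl {l : H ⊗[k] H →ₗ[k] H}
    (hcomul_l : delta k H ∘ₗ l = map l l ∘ₗ dd k H)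
    (hcounit_l : eps k H ∘ₗ l = epseps k H) :
    conv k H l (anti k H ∘ₗ l) = uu k H := by
  have h1 : map l (anti k H ∘ₗ l) = (anti k H).lTensor H ∘ₗ map l l := by
    rw [LinearMap.lTensor, ← TensorProduct.map_comp, LinearMap.id_comp]
  calc conv k H l (anti k H ∘ₗ l)
      = mu k H ∘ₗ (anti k H).lTensor H ∘ₗ (map l l ∘ₗ dd k H) := by
        rw [conv, h1]; rw [LinearMap.comp_assoc]
    _ = (mu k H ∘ₗ (anti k H).lTensor H ∘ₗ Coalgebra.comul) ∘ₗ l := by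
        rw [← hcomul_l]; rfl
    _ = (Algebra.linearMap k H ∘ₗ Coalgebra.counit) ∘ₗ l := by
        rw [← HopfAlgebra.mul_antipode_lTensor_comul (R := k) (A := H)]; rfl
    _ = Algebra.linearMap k H ∘ₗ (eps k H ∘ₗ l) := rfl
    _ = uu k H := by rw [hcounit_l]; rfl

end Aux4
section Aux5

open Coalgebra Finset

/-- auxiliary trilinear gadget, `x₁⊗(x₂⊗x₃) ↦ f(x₁⊗y₁)•(g(x₂⊗y₂)•h(x₃⊗y₃))`. -/
def psi (f g h : H ⊗[k] H →ₗ[k] H) (y₁ y₂ y₃ : H) : H ⊗[k] (H ⊗[k] H) →ₗ[k] H :=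
  mu k H ∘ₗ TensorProduct.map (f ∘ₗ (TensorProduct.mk k H H).flip y₁)
    (mu k H ∘ₗ TensorProduct.map (g ∘ₗ (TensorProduct.mk k H H).flip y₂)
      (h ∘ₗ (TensorProduct.mk k H H).flip y₃))

/-- auxiliary trilinear gadget, `y₁⊗(y₂⊗y₃) ↦ f(x₁⊗y₁)•(g(x₂⊗y₂)•h(x₃⊗y₃))`. -/
def phi (f g h : H ⊗[k] H →ₗ[k] H) (x₁ x₂ x₃ : H) : H ⊗[k] (H ⊗[k] H) →ₗ[k] H :=
  mu k H ∘ₗ TensorProduct.map (f ∘ₗ TensorProduct.mk k H H x₁)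
    (mu k H ∘ₗ TensorProduct.map (g ∘ₗ TensorProduct.mk k H H x₂)
      (h ∘ₗ TensorProduct.mk k H H x₃))

variable {k H}

lemma psi_apply (f g h : H ⊗[k] H →ₗ[k] H) (y₁ y₂ y₃ x₁ x₂ x₃ : H) :
    psi k H f g h y₁ y₂ y₃ (x₁ ⊗ₜ[k] (x₂ ⊗ₜ[k] x₃))
      = f (x₁ ⊗ₜ[k] y₁) * (g (x₂ ⊗ₜ[k] y₂) * h (x₃ ⊗ₜ[k] y₃)) := rfl

lemma phi_apply (f g h : H ⊗[k] H →ₗ[k] H) (x₁ x₂ x₃ y₁ y₂ y₃ : H) :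
    phi k H f g h x₁ x₂ x₃ (y₁ ⊗ₜ[k] (y₂ ⊗ₜ[k] y₃))
      = f (x₁ ⊗ₜ[k] y₁) * (g (x₂ ⊗ₜ[k] y₂) * h (x₃ ⊗ₜ[k] y₃)) := rfl

lemma triple_sum {a : H} (ra : Coalgebra.Repr k a (H × H))
    (r1 : ∀ i : ra.ι, Coalgebra.Repr k (ra.left i) (H × H))
    (r2 : ∀ i : ra.ι, Coalgebra.Repr k (ra.right i) (H × H))
    (ψ : H ⊗[k] (H ⊗[k] H) →ₗ[k] H) :
    ∑ i ∈ ra.index, ∑ p ∈ (r1 i).index,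
      ψ ((r1 i).left p ⊗ₜ[k] ((r1 i).right p ⊗ₜ[k] ra.right i)) =
    ∑ i ∈ ra.index, ∑ p ∈ (r2 i).index,
      ψ (ra.left i ⊗ₜ[k] ((r2 i).left p ⊗ₜ[k] (r2 i).right p)) := by
  have h2 := congrArg ψ (Coalgebra.sum_tmul_tmul_eq ra r1 r2)
  simpa only [map_sum] using h2

lemma triple_sum_mul (f g h : H ⊗[k] H →ₗ[k] H) (y₁ y₂ y₃ : H) {a : H}
    (ra : Coalgebra.Repr k a (H × H))
    (r1 : ∀ i : ra.ι, Coalgebra.Repr k (ra.left i) (H × H))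
    (r2 : ∀ i : ra.ι, Coalgebra.Repr k (ra.right i) (H × H)) :
    ∑ i ∈ ra.index, ∑ p ∈ (r1 i).index,
      f ((r1 i).left p ⊗ₜ[k] y₁) * (g ((r1 i).right p ⊗ₜ[k] y₂) * h (ra.right i ⊗ₜ[k] y₃)) =
    ∑ i ∈ ra.index, ∑ p ∈ (r2 i).index,
      f (ra.left i ⊗ₜ[k] y₁) * (g ((r2 i).left p ⊗ₜ[k] y₂) * h ((r2 i).right p ⊗ₜ[k] y₃)) := by
  simpa only [psi_apply] using triple_sum ra r1 r2 (psi k H f g h y₁ y₂ y₃)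

lemma triple_sum_mul' (f g h : H ⊗[k] H →ₗ[k] H) (x₁ x₂ x₃ : H) {b : H}
    (rb : Coalgebra.Repr k b (H × H))
    (r1 : ∀ j : rb.ι, Coalgebra.Repr k (rb.left j) (H × H))
    (r2 : ∀ j : rb.ι, Coalgebra.Repr k (rb.right j) (H × H)) :
    ∑ j ∈ rb.index, ∑ q ∈ (r1 j).index,
      f (x₁ ⊗ₜ[k] (r1 j).left q) * (g (x₂ ⊗ₜ[k] (r1 j).right q) * h (x₃ ⊗ₜ[k] rb.right j)) =
    ∑ j ∈ rb.index, ∑ q ∈ (r2 j).index,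
      f (x₁ ⊗ₜ[k] rb.left j) * (g (x₂ ⊗ₜ[k] (r2 j).left q) * h (x₃ ⊗ₜ[k] (r2 j).right q)) := by
  simpa only [phi_apply] using triple_sum rb r1 r2 (phi k H f g h x₁ x₂ x₃)

lemma conv_assoc (f g h : H ⊗[k] H →ₗ[k] H) :
    conv k H (conv k H f g) h = conv k H f (conv k H g h) := by
  apply TensorProduct.ext'
  intro a b
  set ra := Coalgebra.Repr.arbitrary k a
  set rb := Coalgebra.Repr.arbitrary k b
  set r1a : ∀ i : ra.ι, Coalgebra.Repr k (ra.left i) (H × H) :=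
    fun i => Coalgebra.Repr.arbitrary k (ra.left i) with hr1a
  set r2a : ∀ i : ra.ι, Coalgebra.Repr k (ra.right i) (H × H) :=
    fun i => Coalgebra.Repr.arbitrary k (ra.right i) with hr2a
  set r1b : ∀ j : rb.ι, Coalgebra.Repr k (rb.left j) (H × H) :=
    fun j => Coalgebra.Repr.arbitrary k (rb.left j) with hr1b
  set r2b : ∀ j : rb.ι, Coalgebra.Repr k (rb.right j) (H × H) :=
    fun j => Coalgebra.Repr.arbitrary k (rb.right j) with hr2b
  rw [conv_tmul (conv k H f g) h a b ra rb, conv_tmul f (conv k H g h) a b ra rb]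
  calc
    ∑ i ∈ ra.index, ∑ j ∈ rb.index,
        conv k H f g (ra.left i ⊗ₜ[k] rb.left j) * h (ra.right i ⊗ₜ[k] rb.right j)
      = ∑ i ∈ ra.index, ∑ j ∈ rb.index, ∑ p ∈ (r1a i).index, ∑ q ∈ (r1b j).index,
          f ((r1a i).left p ⊗ₜ[k] (r1b j).left q) *
            (g ((r1a i).right p ⊗ₜ[k] (r1b j).right q) *
              h (ra.right i ⊗ₜ[k] rb.right j)) := by
        refine Finset.sum_congr rfl fun i _ => Finset.sum_congr rfl fun j _ => ?_
        rw [conv_tmul f g _ _ (r1a i) (r1b j)]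
        simp only [Finset.sum_mul, mul_assoc]
    _ = ∑ i ∈ ra.index, ∑ j ∈ rb.index, ∑ q ∈ (r1b j).index, ∑ p ∈ (r1a i).index,
          f ((r1a i).left p ⊗ₜ[k] (r1b j).left q) *
            (g ((r1a i).right p ⊗ₜ[k] (r1b j).right q) *
              h (ra.right i ⊗ₜ[k] rb.right j)) := by
        exact Finset.sum_congr rfl fun i _ => Finset.sum_congr rfl fun j _ =>
          Finset.sum_comm
    _ = ∑ j ∈ rb.index, ∑ i ∈ ra.index, ∑ q ∈ (r1b j).index, ∑ p ∈ (r1a i).index,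
          f ((r1a i).left p ⊗ₜ[k] (r1b j).left q) *
            (g ((r1a i).right p ⊗ₜ[k] (r1b j).right q) *
              h (ra.right i ⊗ₜ[k] rb.right j)) := Finset.sum_comm
    _ = ∑ j ∈ rb.index, ∑ q ∈ (r1b j).index, ∑ i ∈ ra.index, ∑ p ∈ (r1a i).index,
          f ((r1a i).left p ⊗ₜ[k] (r1b j).left q) *
            (g ((r1a i).right p ⊗ₜ[k] (r1b j).right q) *
              h (ra.right i ⊗ₜ[k] rb.right j)) := by
        exact Finset.sum_congr rfl fun j _ => Finset.sum_comm
    _ = ∑ j ∈ rb.index, ∑ q ∈ (r1b j).index, ∑ i ∈ ra.index, ∑ p ∈ (r2a i).index,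
          f (ra.left i ⊗ₜ[k] (r1b j).left q) *
            (g ((r2a i).left p ⊗ₜ[k] (r1b j).right q) *
              h ((r2a i).right p ⊗ₜ[k] rb.right j)) := by
        exact Finset.sum_congr rfl fun j _ => Finset.sum_congr rfl fun q _ =>
          triple_sum_mul f g h _ _ _ ra r1a r2a
    _ = ∑ j ∈ rb.index, ∑ i ∈ ra.index, ∑ q ∈ (r1b j).index, ∑ p ∈ (r2a i).index,
          f (ra.left i ⊗ₜ[k] (r1b j).left q) *
            (g ((r2a i).left p ⊗ₜ[k] (r1b j).right q) *
              h ((r2a i).right p ⊗ₜ[k] rb.right j)) := by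
        exact Finset.sum_congr rfl fun j _ => Finset.sum_comm
    _ = ∑ i ∈ ra.index, ∑ j ∈ rb.index, ∑ q ∈ (r1b j).index, ∑ p ∈ (r2a i).index,
          f (ra.left i ⊗ₜ[k] (r1b j).left q) *
            (g ((r2a i).left p ⊗ₜ[k] (r1b j).right q) *
              h ((r2a i).right p ⊗ₜ[k] rb.right j)) := Finset.sum_comm
    _ = ∑ i ∈ ra.index, ∑ j ∈ rb.index, ∑ p ∈ (r2a i).index, ∑ q ∈ (r1b j).index,
          f (ra.left i ⊗ₜ[k] (r1b j).left q) *
            (g ((r2a i).left p ⊗ₜ[k] (r1b j).right q) *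
              h ((r2a i).right p ⊗ₜ[k] rb.right j)) := by
        exact Finset.sum_congr rfl fun i _ => Finset.sum_congr rfl fun j _ =>
          Finset.sum_comm
    _ = ∑ i ∈ ra.index, ∑ p ∈ (r2a i).index, ∑ j ∈ rb.index, ∑ q ∈ (r1b j).index,
          f (ra.left i ⊗ₜ[k] (r1b j).left q) *
            (g ((r2a i).left p ⊗ₜ[k] (r1b j).right q) *
              h ((r2a i).right p ⊗ₜ[k] rb.right j)) := by
        exact Finset.sum_congr rfl fun i _ => Finset.sum_comm
    _ = ∑ i ∈ ra.index, ∑ p ∈ (r2a i).index, ∑ j ∈ rb.index, ∑ q ∈ (r2b j).index,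
          f (ra.left i ⊗ₜ[k] rb.left j) *
            (g ((r2a i).left p ⊗ₜ[k] (r2b j).left q) *
              h ((r2a i).right p ⊗ₜ[k] (r2b j).right q)) := by
        exact Finset.sum_congr rfl fun i _ => Finset.sum_congr rfl fun p _ =>
          triple_sum_mul' f g h _ _ _ rb r1b r2b
    _ = ∑ i ∈ ra.index, ∑ j ∈ rb.index, ∑ p ∈ (r2a i).index, ∑ q ∈ (r2b j).index,
          f (ra.left i ⊗ₜ[k] rb.left j) *
            (g ((r2a i).left p ⊗ₜ[k] (r2b j).left q) *
              h ((r2a i).right p ⊗ₜ[k] (r2b j).right q)) := by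
        exact Finset.sum_congr rfl fun i _ => Finset.sum_comm
    _ = ∑ i ∈ ra.index, ∑ j ∈ rb.index,
          f (ra.left i ⊗ₜ[k] rb.left j) * conv k H g h (ra.right i ⊗ₜ[k] rb.right j) := by
        refine Finset.sum_congr rfl fun i _ => Finset.sum_congr rfl fun j _ => ?_
        rw [conv_tmul g h _ _ (r2a i) (r2b j), Finset.mul_sum]
        exact Finset.sum_congr rfl fun p _ => by rw [Finset.mul_sum]
end Aux5

/-- for a left action `l = ⇀` and a right action `r = ↼` of a Hopf algebra `H`
on itself making `H` a left/right `H`-module coalgebra, the braided commutativity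
`a•b = (a₁⇀b₁)•(a₂↼b₂)` is equivalent to `a↼b = T(a₁⇀b₁)•a₂•b₂`, which is in turn
equivalent to `T(a⇀b) = (a₁↼b₁)•T(b₂)•T(a₂)`. -/
theorem star_iff_rightaction_iff_T_harpoon (l r : H ⊗[k] H →ₗ[k] H)
    (hl1 : ∀ b : H, l ((1 : H) ⊗ₜ[k] b) = b)
    (hl2 : ∀ a b c : H, l ((a * b) ⊗ₜ[k] c) = l (a ⊗ₜ[k] l (b ⊗ₜ[k] c)))
    (hr1 : ∀ a : H, r (a ⊗ₜ[k] (1 : H)) = a)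
    (hr2 : ∀ a b c : H, r (a ⊗ₜ[k] (b * c)) = r (r (a ⊗ₜ[k] b) ⊗ₜ[k] c))
    (hcomul_l : delta k H ∘ₗ l = map l l ∘ₗ dd k H)
    (hcounit_l : eps k H ∘ₗ l = epseps k H)
    (hcomul_r : delta k H ∘ₗ r = map r r ∘ₗ dd k H)
    (hcounit_r : eps k H ∘ₗ r = epseps k H) :
    ((mu k H ∘ₗ sig k H l r = mu k H) ↔
      (r = mu k H ∘ₗ map (anti k H ∘ₗ l) (mu k H) ∘ₗ dd k H)) ∧
    ((r = mu k H ∘ₗ map (anti k H ∘ₗ l) (mu k H) ∘ₗ dd k H) ↔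
      (anti k H ∘ₗ l
        = mu k H ∘ₗ map r (mu k H ∘ₗ map (anti k H) (anti k H) ∘ₗ tau k H) ∘ₗ dd k H)) := by

  have hsig : mu k H ∘ₗ sig k H l r = conv k H l r := rfl
  have e1 : mu k H ∘ₗ map (anti k H ∘ₗ l) (mu k H) ∘ₗ dd k H
      = conv k H (anti k H ∘ₗ l) (mu k H) := rfl
  have e2 : mu k H ∘ₗ map r (mu k H ∘ₗ map (anti k H) (anti k H) ∘ₗ tau k H) ∘ₗ dd k H
      = conv k H r (nu k H) := rfl
  have hinv1 : conv k H (anti k H ∘ₗ l) l = uu k H := conv_Tl_l hcomul_l hcounit_l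
  have hinv2 : conv k H l (anti k H ∘ₗ l) = uu k H := conv_l_Tl hcomul_l hcounit_l
  rw [hsig, e1, e2]
  constructor
  · constructor
    · intro hstar
      calc r = conv k H (uu k H) r := (conv_uu_left r).symm
        _ = conv k H (conv k H (anti k H ∘ₗ l) l) r := by rw [hinv1]
        _ = conv k H (anti k H ∘ₗ l) (conv k H l r) := conv_assoc _ _ _
        _ = conv k H (anti k H ∘ₗ l) (mu k H) := by rw [hstar]
    · intro hr
      calc conv k H l r = conv k H l (conv k H (anti k H ∘ₗ l) (mu k H)) := by rw [← hr]
        _ = conv k H (conv k H l (anti k H ∘ₗ l)) (mu k H) := (conv_assoc _ _ _).symm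
        _ = conv k H (uu k H) (mu k H) := by rw [hinv2]
        _ = mu k H := conv_uu_left _
  · constructor
    · intro hr
      calc anti k H ∘ₗ l = conv k H (anti k H ∘ₗ l) (uu k H) := (conv_uu_right _).symm
        _ = conv k H (anti k H ∘ₗ l) (conv k H (mu k H) (nu k H)) := by rw [conv_mu_nu]
        _ = conv k H (conv k H (anti k H ∘ₗ l) (mu k H)) (nu k H) := (conv_assoc _ _ _).symm
        _ = conv k H r (nu k H) := by rw [← hr]
    · intro hTl
      calc r = conv k H r (uu k H) := (conv_uu_right r).symm
        _ = conv k H r (conv k H (nu k H) (mu k H)) := by rw [conv_nu_mu]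
        _ = conv k H (conv k H r (nu k H)) (mu k H) := (conv_assoc _ _ _).symm
        _ = conv k H (anti k H ∘ₗ l) (mu k H) := by rw [← hTl]

end
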